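/- Suppose (T, ⊑) is finite with least element ⊥ and any two elements of T having a common upper bound are comparable, and suppose the program Π is consistent. Let x = height(T) · |L|, where height(T) is the maximum number of elements of a chain in T and |L| is the number of ground literals. Then T_Π↑x equals the least fixpoint of T_Π; that is, the fixpoint iteration converges within height(T) · |L| applications of the operator. -/

import Mathlib

/-- A ground GAP rule: a head literal (element of `A × Bool`) with a head
annotation in `T`, together with a finite set of body pairs of literals
with annotations. -/
structure GAPRule (A T : Type*) where
  head : A × Bool
  headAnn : T
  body : Set ((A × Bool) × T)
  body_finite : body.Finite

/-- An interpretation `I` satisfies the annotated literal `ℓ:μ` iff `μ ⊑ I ℓ`. -/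
def satLit {A T : Type*} [PartialOrder T] (I : A × Bool → T) (ℓ : A × Bool) (μ : T) : Prop :=
  μ ≤ I ℓ

/-- An interpretation satisfies a rule iff it satisfies the head annotated
literal or fails to satisfy some body annotated literal. -/
def satRule {A T : Type*} [PartialOrder T] (I : A × Bool → T) (r : GAPRule A T) : Prop :=
  satLit I r.head r.headAnn ∨ ∃ p ∈ r.body, ¬ satLit I p.1 p.2

/-- `I` is a model of a program `P` iff it satisfies every rule of `P`. -/
def isModel {A T : Type*} [PartialOrder T] (I : A × Bool → T) (P : Set (GAPRule A T)) : Prop :=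
  ∀ r ∈ P, satRule I r

/-- `annoSet P I ℓ = {I ℓ} ∪ {μ₀ : some rule of P has head ℓ:μ₀ and I satisfies
every body annotated literal of that rule}`. -/
def annoSet {A T : Type*} [PartialOrder T] (P : Set (GAPRule A T)) (I : A × Bool → T)
    (ℓ : A × Bool) : Set T :=
  {I ℓ} ∪ {μ | ∃ r ∈ P, r.head = ℓ ∧ r.headAnn = μ ∧ ∀ p ∈ r.body, satLit I p.1 p.2}

open scoped Classical in
/-- The height of an element: max cardinality of a chain below it. -/
noncomputable def rankIn {T : Type*} [PartialOrder T] [Fintype T] (t : T) : ℕ :=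
  (Finset.univ.filter (fun s : Finset T =>
      IsChain (· ≤ ·) (↑s : Set T) ∧ ∀ a ∈ s, a ≤ t)).sup Finset.card

lemma rankIn_le {T : Type*} [PartialOrder T] [Fintype T] (h : ℕ)
    (hchain_le : ∀ s : Finset T, IsChain (· ≤ ·) (↑s : Set T) → s.card ≤ h) (t : T) :
    rankIn t ≤ h := by
  classical
  apply Finset.sup_le
  intro s hs
  simp only [rankIn, Finset.mem_filter, Finset.mem_univ, true_and] at hs
  exact hchain_le s hs.1

lemma rankIn_pos {T : Type*} [PartialOrder T] [Fintype T] (t : T) : 1 ≤ rankIn t := by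
  classical
  have : ({t} : Finset T) ∈ (Finset.univ.filter (fun s : Finset T =>
      IsChain (· ≤ ·) (↑s : Set T) ∧ ∀ a ∈ s, a ≤ t)) := by
    simp only [Finset.mem_filter, Finset.mem_univ, true_and]
    refine ⟨?_, by simp⟩
    rw [Finset.coe_singleton]
    exact Set.subsingleton_singleton.isChain
  have := Finset.le_sup (f := Finset.card) this
  simpa [rankIn] using this

lemma rankIn_mono {T : Type*} [PartialOrder T] [Fintype T] {s t : T} (hst : s ≤ t) :
    rankIn s ≤ rankIn t := by
  classical
  apply Finset.sup_mono
  intro c hc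
  simp only [Finset.mem_filter, Finset.mem_univ, true_and] at hc ⊢
  exact ⟨hc.1, fun a ha => (hc.2 a ha).trans hst⟩

lemma rankIn_strict {T : Type*} [PartialOrder T] [Fintype T] {s t : T} (hst : s < t) :
    rankIn s < rankIn t := by
  classical
  have hne : (Finset.univ.filter (fun c : Finset T =>
      IsChain (· ≤ ·) (↑c : Set T) ∧ ∀ a ∈ c, a ≤ s)).Nonempty := by
    refine ⟨∅, ?_⟩
    simp only [Finset.mem_filter, Finset.mem_univ, true_and]
    refine ⟨?_, by simp⟩
    rw [Finset.coe_empty]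
    exact Set.subsingleton_empty.isChain
  obtain ⟨c, hc, hcard⟩ := Finset.exists_mem_eq_sup _ hne Finset.card
  simp only [Finset.mem_filter, Finset.mem_univ, true_and] at hc
  obtain ⟨hchain, hble⟩ := hc
  have htc : t ∉ c := fun htc => absurd (hble t htc) (not_le_of_gt hst)
  have hchain' : IsChain (· ≤ ·) (↑(insert t c) : Set T) := by
    rw [Finset.coe_insert]
    apply hchain.insert
    intro b hb _
    exact Or.inr ((hble b hb).trans hst.le)
  have hle : (insert t c).card ≤ rankIn t := by
    apply Finset.le_sup
    simp only [Finset.mem_filter, Finset.mem_univ, true_and]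
    refine ⟨hchain', ?_⟩
    intro a ha
    rcases Finset.mem_insert.mp ha with rfl | ha
    · exact le_rfl
    · exact (hble a ha).trans hst.le
  rw [Finset.card_insert_of_notMem htc] at hle
  have : rankIn s = c.card := hcard
  omega


/-- Suppose `T` is finite with least element `⊥`, any two elements
of `T` with a common upper bound are comparable, and `P` is consistent.  Let
`h` be the maximum number of elements of a chain in `T` and let
`x = h * |L|` where `L = A × Bool` is the set of ground literals.  Then the
iterates `T_Π↑i` are all defined and `T_Π↑x` is the least fixpoint of `T_Π`:
it is a fixpoint, and it lies below every fixpoint. -/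
theorem iterate_converges_within_height_mul_card {A T : Type*} [Fintype A] [Nonempty A]
    [PartialOrder T] [Fintype T] [OrderBot T]
    (hcomp : ∀ a b : T, (∃ c : T, a ≤ c ∧ b ≤ c) → a ≤ b ∨ b ≤ a)
    (P : Set (GAPRule A T)) (hfin : P.Finite)
    (hcons : ∃ M : A × Bool → T, isModel M P)
    (h : ℕ)
    (hchain_le : ∀ s : Finset T, IsChain (· ≤ ·) (↑s : Set T) → s.card ≤ h)
    (hchain_max : ∃ s : Finset T, IsChain (· ≤ ·) (↑s : Set T) ∧ s.card = h) :
    ∃ seq : ℕ → (A × Bool → T),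
      seq 0 = (fun _ : A × Bool => (⊥ : T)) ∧
      (∀ (i : ℕ) (ℓ : A × Bool), IsLUB (annoSet P (seq i) ℓ) (seq (i + 1) ℓ)) ∧
      (∀ ℓ : A × Bool,
        IsLUB (annoSet P (seq (h * Fintype.card (A × Bool))) ℓ)
          (seq (h * Fintype.card (A × Bool)) ℓ)) ∧
      (∀ J : A × Bool → T, (∀ ℓ : A × Bool, IsLUB (annoSet P J ℓ) (J ℓ)) →
        ∀ ℓ : A × Bool, seq (h * Fintype.card (A × Bool)) ℓ ≤ J ℓ) := by
  classical
  obtain ⟨M, hM⟩ := hcons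
  -- A nonempty subset of T with a common upper bound is a chain and has a greatest element,
  -- which is its LUB.
  have lub_exists : ∀ S : Set T, S.Nonempty → (∃ c, ∀ s ∈ S, s ≤ c) →
      ∃ t ∈ S, IsLUB S t := by
    rintro S hne ⟨c, hc⟩
    obtain ⟨t, htS, hmax'⟩ := (Set.toFinite S).exists_maximal hne
    have hmax : ∀ a' ∈ S, t ≤ a' → t = a' := fun a' ha' h => le_antisymm h (hmax' ha' h)
    have hub : ∀ s ∈ S, s ≤ t := by
      intro s hs
      rcases hcomp s t ⟨c, hc s hs, hc t htS⟩ with h1 | h1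
      · exact h1
      · exact le_of_eq (hmax s hs h1).symm
    exact ⟨t, htS, hub, fun b hb => hb htS⟩
  -- every element of annoSet is below the model M, whenever I ≤ M
  have anno_ub : ∀ I : A × Bool → T, (∀ ℓ, I ℓ ≤ M ℓ) →
      ∀ ℓ, ∀ t ∈ annoSet P I ℓ, t ≤ M ℓ := by
    intro I hI ℓ t ht
    simp only [annoSet, Set.mem_union, Set.mem_singleton_iff, Set.mem_setOf_eq] at ht
    rcases ht with rfl | ⟨r, hr, hhead, hann, hbody⟩
    · exact hI ℓ
    · rcases hM r hr with hs | ⟨p, hp, hns⟩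
      · rw [← hann, ← hhead]; exact hs
      · exact absurd (le_trans (hbody p hp) (hI p.1)) hns
  let next : (A × Bool → T) → (A × Bool → T) := fun I ℓ =>
    if hex : ∃ t, IsLUB (annoSet P I ℓ) t then hex.choose else ⊥
  have next_spec : ∀ (I : A × Bool → T) (ℓ), (∃ t, IsLUB (annoSet P I ℓ) t) →
      IsLUB (annoSet P I ℓ) (next I ℓ) := by
    intro I ℓ hex
    simp only [next, dif_pos hex]
    exact hex.choose_spec
  let seq : ℕ → (A × Bool → T) := fun i => next^[i] (fun _ => ⊥)
  have hseq_succ : ∀ i, seq (i + 1) = next (seq i) := by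
    intro i
    simp only [seq, Function.iterate_succ_apply']
  have step : ∀ I : A × Bool → T, (∀ ℓ, I ℓ ≤ M ℓ) →
      (∀ ℓ, IsLUB (annoSet P I ℓ) (next I ℓ)) ∧ (∀ ℓ, next I ℓ ≤ M ℓ) := by
    intro I hI
    have hlub : ∀ ℓ, IsLUB (annoSet P I ℓ) (next I ℓ) := by
      intro ℓ
      apply next_spec
      obtain ⟨t, _, ht⟩ := lub_exists (annoSet P I ℓ) ⟨I ℓ, Or.inl rfl⟩
        ⟨M ℓ, anno_ub I hI ℓ⟩
      exact ⟨t, ht⟩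
    exact ⟨hlub, fun ℓ => (hlub ℓ).2 (anno_ub I hI ℓ)⟩
  have hbound : ∀ i, ∀ ℓ, seq i ℓ ≤ M ℓ := by
    intro i
    induction i with
    | zero => intro ℓ; exact bot_le
    | succ n ih => intro ℓ; rw [hseq_succ]; exact (step (seq n) ih).2 ℓ
  have hlub : ∀ i ℓ, IsLUB (annoSet P (seq i) ℓ) (seq (i + 1) ℓ) := by
    intro i ℓ
    rw [hseq_succ]
    exact (step (seq i) (hbound i)).1 ℓ
  -- monotonicity of the operator through LUBs
  have mono : ∀ I J : A × Bool → T, (∀ ℓ, I ℓ ≤ J ℓ) → ∀ ℓ u v,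
      IsLUB (annoSet P I ℓ) u → IsLUB (annoSet P J ℓ) v → u ≤ v := by
    intro I J hIJ ℓ u v hu hv
    apply hu.2
    intro t ht
    simp only [annoSet, Set.mem_union, Set.mem_singleton_iff, Set.mem_setOf_eq] at ht
    rcases ht with rfl | ⟨r, hr, hhead, hann, hbody⟩
    · exact le_trans (hIJ ℓ) (hv.1 (Or.inl rfl))
    · apply hv.1
      refine Or.inr ⟨r, hr, hhead, hann, fun p hp => le_trans (hbody p hp) (hIJ p.1)⟩
  have seq_mono : ∀ i ℓ, seq i ℓ ≤ seq (i + 1) ℓ := by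
    intro i
    induction i with
    | zero => intro ℓ; exact bot_le
    | succ n ih =>
      intro ℓ
      exact mono (seq n) (seq (n + 1)) ih ℓ _ _ (hlub n ℓ) (hlub (n + 1) ℓ)
  -- counting argument: the iteration stabilizes before h * |L|
  have msum_lt : ∀ k, seq k ≠ seq (k + 1) →
      (∑ ℓ : A × Bool, rankIn (seq k ℓ)) < ∑ ℓ : A × Bool, rankIn (seq (k + 1) ℓ) := by
    intro k hne
    apply Finset.sum_lt_sum
    · intro ℓ _; exact rankIn_mono (seq_mono k ℓ)
    · have : ∃ ℓ, seq k ℓ ≠ seq (k + 1) ℓ := by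
        by_contra hcon
        push_neg at hcon
        exact hne (funext hcon)
      obtain ⟨ℓ, hℓ⟩ := this
      exact ⟨ℓ, Finset.mem_univ _, rankIn_strict (lt_of_le_of_ne (seq_mono k ℓ) hℓ)⟩
  have msum_ub : ∀ k, (∑ ℓ : A × Bool, rankIn (seq k ℓ)) ≤ h * Fintype.card (A × Bool) := by
    intro k
    calc (∑ ℓ : A × Bool, rankIn (seq k ℓ)) ≤ ∑ _ℓ : A × Bool, h :=
          Finset.sum_le_sum (fun ℓ _ => rankIn_le h hchain_le _)
      _ = h * Fintype.card (A × Bool) := by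
          simp [Finset.sum_const, mul_comm]
  have msum_lb : ∀ k, Fintype.card (A × Bool) ≤ ∑ ℓ : A × Bool, rankIn (seq k ℓ) := by
    intro k
    calc Fintype.card (A × Bool) = ∑ _ℓ : A × Bool, 1 := by simp
      _ ≤ ∑ ℓ : A × Bool, rankIn (seq k ℓ) :=
          Finset.sum_le_sum (fun ℓ _ => rankIn_pos _)
  have exists_stab : ∃ k < h * Fintype.card (A × Bool), seq k = seq (k + 1) := by
    by_contra hcon
    push_neg at hcon
    have grow : ∀ k, k ≤ h * Fintype.card (A × Bool) →
        k + Fintype.card (A × Bool) ≤ ∑ ℓ : A × Bool, rankIn (seq k ℓ) := by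
      intro k
      induction k with
      | zero => intro _; simpa using msum_lb 0
      | succ n ih =>
        intro hk
        have h1 := ih (le_of_lt (Nat.lt_of_succ_le hk))
        have h2 := msum_lt n (hcon n (Nat.lt_of_succ_le hk))
        omega
    have h1 := grow _ le_rfl
    have h2 := msum_ub (h * Fintype.card (A × Bool))
    have h3 : 0 < Fintype.card (A × Bool) := Fintype.card_pos
    omega
  obtain ⟨k, hk, hstabk⟩ := exists_stab
  have stab : ∀ m, seq (k + m) = seq k := by
    intro m
    induction m with
    | zero => rfl
    | succ n ih =>
      calc seq (k + (n + 1)) = next (seq (k + n)) := hseq_succ _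
        _ = next (seq k) := by rw [ih]
        _ = seq (k + 1) := (hseq_succ k).symm
        _ = seq k := hstabk.symm
  have hxk : seq (h * Fintype.card (A × Bool)) = seq k := by
    have := stab (h * Fintype.card (A × Bool) - k)
    rwa [Nat.add_sub_cancel' hk.le] at this
  refine ⟨seq, rfl, hlub, ?_, ?_⟩
  · intro ℓ
    have hfix := hlub k ℓ
    rw [← hstabk] at hfix
    rw [hxk]
    exact hfix
  · intro J hJ
    have below : ∀ i ℓ, seq i ℓ ≤ J ℓ := by
      intro i
      induction i with
      | zero => intro ℓ; exact bot_le
      | succ n ih =>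
        intro ℓ
        exact mono (seq n) J ih ℓ _ _ (hlub n ℓ) (hJ ℓ)
    intro ℓ
    exact below _ ℓ
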